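/- Let S be a Steiner system S(5,8,24) on a 24-element set Ω, let ∞, 0, 1 ∈ Ω be distinct points, let K₀ ∈ S be an octad with 0 ∈ K₀ and ∞ ∉ K₀, 1 ∉ K₀, and let F = {K ∈ S : ∞ ∈ K, 0 ∈ K, 1 ∉ K, |K ∩ K₀| = 4}. Then every point k ∈ K₀ with k ≠ 0 lies in exactly 12 of the members of F. -/

import Mathlib

set_option linter.unusedSectionVars false

/-- A Steiner system `S(5,8,24)`: `Ω` has 24 elements, every block (octad) has 8
elements, and every 5-element subset of `Ω` is contained in exactly one octad. -/
def IsSteinerSystem_5_8_24 {Ω : Type*} [Fintype Ω] [DecidableEq Ω]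
    (S : Finset (Finset Ω)) : Prop :=
  Fintype.card Ω = 24 ∧
  (∀ K ∈ S, K.card = 8) ∧
  ∀ A : Finset Ω, A.card = 5 → ∃! K, K ∈ S ∧ A ⊆ K

open Finset

section Helpers

variable {Ω : Type*} [Fintype Ω] [DecidableEq Ω]

lemma swapAB (X Y : Finset (Finset Ω)) :
    ∑ A ∈ X, (Y.filter fun K => A ⊆ K).card = ∑ K ∈ Y, (X.filter fun A => A ⊆ K).card := by
  simp only [Finset.card_filter]
  exact Finset.sum_comm

lemma swapPt (X : Finset Ω) (Y : Finset (Finset Ω)) :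
    ∑ K ∈ Y, (X.filter (· ∈ K)).card = ∑ x ∈ X, (Y.filter fun K => x ∈ K).card := by
  simp only [Finset.card_filter]
  exact Finset.sum_comm

lemma lam5 (S : Finset (Finset Ω))
    (h : ∀ A : Finset Ω, A.card = 5 → ∃! K, K ∈ S ∧ A ⊆ K)
    (A : Finset Ω) (hA : A.card = 5) :
    (S.filter fun K => A ⊆ K).card = 1 := by
  obtain ⟨K, ⟨hKS, hAK⟩, huniq⟩ := h A hA
  rw [Finset.card_eq_one]
  exact ⟨K, by
    ext L
    simp only [mem_filter, mem_singleton]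
    constructor
    · rintro ⟨hL, hAL⟩; exact huniq L ⟨hL, hAL⟩
    · rintro rfl; exact ⟨hKS, hAK⟩⟩

lemma lam4 (S : Finset (Finset Ω)) (hS : IsSteinerSystem_5_8_24 S)
    (A : Finset Ω) (hA : A.card = 4) :
    (S.filter fun K => A ⊆ K).card = 5 := by
  obtain ⟨hcard, hoct, h5⟩ := hS
  set T := S.filter fun K => A ⊆ K with hT
  have key : ∑ K ∈ T, ((univ \ A).filter (· ∈ K)).card
      = ∑ x ∈ univ \ A, (T.filter fun K => x ∈ K).card := swapPt _ _
  have L1 : ∀ K ∈ T, ((univ \ A).filter (· ∈ K)).card = 4 := by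
    intro K hK
    rw [mem_filter] at hK
    have : (univ \ A).filter (· ∈ K) = K \ A := by
      ext x; simp only [mem_filter, mem_sdiff, mem_univ, true_and]; tauto
    rw [this, card_sdiff_of_subset hK.2, hoct K hK.1, hA]
  have L2 : ∀ x ∈ univ \ A, (T.filter fun K => x ∈ K).card = 1 := by
    intro x hx
    rw [mem_sdiff] at hx
    have : T.filter (fun K => x ∈ K) = S.filter fun K => insert x A ⊆ K := by
      rw [hT, filter_filter]
      apply filter_congr
      intro K _
      simp [insert_subset_iff, and_comm]
    rw [this]
    exact lam5 S h5 _ (by rw [card_insert_of_notMem hx.2, hA])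
  rw [Finset.sum_congr rfl L1, Finset.sum_congr rfl L2] at key
  simp only [Finset.sum_const, smul_eq_mul, mul_one] at key
  have : (univ \ A).card = 20 := by
    rw [card_sdiff_of_subset (subset_univ _), card_univ, hcard, hA]
  omega

lemma lam3 (S : Finset (Finset Ω)) (hS : IsSteinerSystem_5_8_24 S)
    (A : Finset Ω) (hA : A.card = 3) :
    (S.filter fun K => A ⊆ K).card = 21 := by
  obtain ⟨hcard, hoct, h5⟩ := hS
  set T := S.filter fun K => A ⊆ K with hT
  set X := (univ \ A).powersetCard 2 with hX
  have key : ∑ B ∈ X, (T.filter fun K => B ⊆ K).card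
      = ∑ K ∈ T, (X.filter fun B => B ⊆ K).card := swapAB _ _
  have L1 : ∀ B ∈ X, (T.filter fun K => B ⊆ K).card = 1 := by
    intro B hB
    rw [hX, mem_powersetCard] at hB
    have hdisj : Disjoint A B := by
      rw [disjoint_right]
      intro x hxB hxA
      have := hB.1 hxB
      rw [mem_sdiff] at this
      exact this.2 hxA
    have : T.filter (fun K => B ⊆ K) = S.filter fun K => A ∪ B ⊆ K := by
      rw [hT, filter_filter]
      apply filter_congr
      intro K _
      simp [union_subset_iff]
    rw [this]
    exact lam5 S h5 _ (by rw [card_union_of_disjoint hdisj, hA, hB.2])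
  have L2 : ∀ K ∈ T, (X.filter fun B => B ⊆ K).card = 10 := by
    intro K hK
    rw [hT, mem_filter] at hK
    have : X.filter (fun B => B ⊆ K) = (K \ A).powersetCard 2 := by
      ext B
      simp only [hX, mem_filter, mem_powersetCard]
      constructor
      · rintro ⟨⟨hBu, hB2⟩, hBK⟩
        refine ⟨fun x hx => ?_, hB2⟩
        rw [mem_sdiff]
        have := hBu hx; rw [mem_sdiff] at this
        exact ⟨hBK hx, this.2⟩
      · rintro ⟨hBKA, hB2⟩
        refine ⟨⟨fun x hx => ?_, hB2⟩, fun x hx => ?_⟩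
        · have := hBKA hx; rw [mem_sdiff] at this
          simp [this.2]
        · exact (mem_sdiff.mp (hBKA hx)).1
    rw [this, card_powersetCard, card_sdiff_of_subset hK.2, hoct K hK.1, hA]; decide
  rw [Finset.sum_congr rfl L1, Finset.sum_congr rfl L2] at key
  simp only [Finset.sum_const, smul_eq_mul, mul_one] at key
  have : X.card = 210 := by
    rw [hX, card_powersetCard, card_sdiff_of_subset (subset_univ _), card_univ, hcard, hA]; decide
  omega

lemma cap_le_four (S : Finset (Finset Ω))
    (h5 : ∀ A : Finset Ω, A.card = 5 → ∃! K, K ∈ S ∧ A ⊆ K)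
    (K₀ : Finset Ω) (hK₀S : K₀ ∈ S) :
    ∀ K ∈ S, K ≠ K₀ → (K ∩ K₀).card ≤ 4 := by
  intro K hK hne
  by_contra h
  push_neg at h
  obtain ⟨A, hAsub, hA5⟩ := Finset.exists_subset_card_eq (s := K ∩ K₀) (n := 5) h
  obtain ⟨L, _, huniq⟩ := h5 A hA5
  have h1 : K = L := huniq K ⟨hK, hAsub.trans (inter_subset_left)⟩
  have h2 : K₀ = L := huniq K₀ ⟨hK₀S, hAsub.trans (inter_subset_right)⟩
  exact hne (h1.trans h2.symm)

lemma no_triple_meet (S : Finset (Finset Ω)) (hS : IsSteinerSystem_5_8_24 S)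
    (K₀ : Finset Ω) (hK₀S : K₀ ∈ S) :
    ∀ K ∈ S, K ≠ K₀ → (K ∩ K₀).card ≠ 3 := by
  have hoct := hS.2.1
  have h5 := hS.2.2
  intro K₁ hK₁ hne₁ hc₁
  set S' := S.filter (· ≠ K₀) with hS'
  have hK₀8 : K₀.card = 8 := hoct K₀ hK₀S
  have hRHS : ∀ j : ℕ, ∀ K ∈ S', ((K₀.powersetCard j).filter fun A => A ⊆ K).card
      = ((K ∩ K₀).card).choose j := by
    intro j K _
    have : (K₀.powersetCard j).filter (fun A => A ⊆ K) = (K ∩ K₀).powersetCard j := by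
      ext A
      simp only [mem_filter, mem_powersetCard, subset_inter_iff]
      tauto
    rw [this, card_powersetCard]
  have hLHS : ∀ j m : ℕ, (∀ A : Finset Ω, A.card = j → (S.filter fun K => A ⊆ K).card = m) →
      ∀ A ∈ K₀.powersetCard j, (S'.filter fun K => A ⊆ K).card = m - 1 := by
    intro j m hm A hA
    rw [mem_powersetCard] at hA
    have heq : S'.filter (fun K => A ⊆ K) = (S.filter fun K => A ⊆ K).erase K₀ := by
      ext L
      simp only [hS', mem_erase, mem_filter, filter_filter]
      tauto
    rw [heq, card_erase_of_mem (by simp [mem_filter, hK₀S, hA.1]), hm A hA.2]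
  have key3 := swapAB (K₀.powersetCard 3) S'
  have key4 := swapAB (K₀.powersetCard 4) S'
  rw [Finset.sum_congr rfl (hLHS 3 21 (lam3 S hS)),
      Finset.sum_congr rfl (fun K hK => hRHS 3 K hK)] at key3
  rw [Finset.sum_congr rfl (hLHS 4 5 (lam4 S hS)),
      Finset.sum_congr rfl (fun K hK => hRHS 4 K hK)] at key4
  simp only [Finset.sum_const, smul_eq_mul, card_powersetCard, hK₀8] at key3 key4
  -- key3 : 56 * 20 = ∑ choose 3 ; key4 : 70 * 4 = ∑ choose 4
  have hsplit : ∀ K ∈ S', ((K ∩ K₀).card).choose 3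
      = 4 * ((K ∩ K₀).card).choose 4 + (if (K ∩ K₀).card = 3 then 1 else 0) := by
    intro K hK
    rw [hS', mem_filter] at hK
    have hle := cap_le_four S h5 K₀ hK₀S K hK.1 hK.2
    interval_cases h : (K ∩ K₀).card <;> decide
  rw [Finset.sum_congr rfl hsplit, Finset.sum_add_distrib, ← Finset.mul_sum, ← key4] at key3
  have hzero : ∑ K ∈ S', (if (K ∩ K₀).card = 3 then 1 else 0) = 0 := by
    have h83 : Nat.choose 8 3 = 56 := by decide
    have h84 : Nat.choose 8 4 = 70 := by decide
    rw [h83, h84] at key3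
    omega
  rw [← Finset.card_filter] at hzero
  have : K₁ ∈ S'.filter fun K => (K ∩ K₀).card = 3 := by
    simp [hS', mem_filter, hK₁, hne₁, hc₁]
  rw [Finset.card_eq_zero] at hzero
  simp [hzero] at this


end Helpers

theorem point_of_K0_in_twelve_octads {Ω : Type*} [Fintype Ω] [DecidableEq Ω]
    (S : Finset (Finset Ω)) (hS : IsSteinerSystem_5_8_24 S)
    (pinf p0 p1 : Ω) (h01 : p0 ≠ p1) (hinf0 : pinf ≠ p0) (hinf1 : pinf ≠ p1)
    (K₀ : Finset Ω) (hK₀S : K₀ ∈ S)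
    (h0K : p0 ∈ K₀) (hinfK : pinf ∉ K₀) (h1K : p1 ∉ K₀)
    (F : Finset (Finset Ω))
    (hF : F = S.filter fun K => pinf ∈ K ∧ p0 ∈ K ∧ p1 ∉ K ∧ (K ∩ K₀).card = 4) :
    ∀ k ∈ K₀, k ≠ p0 →
      (F.filter fun K => k ∈ K).card = 12 := by
  intro k hkK hk0
  have hoct := hS.2.1
  have h5 := hS.2.2
  have hcle := cap_le_four S h5 K₀ hK₀S
  have hn3 := no_triple_meet S hS K₀ hK₀S
  have hpinfk : pinf ≠ k := fun h => hinfK (h ▸ hkK)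
  have hp1k : p1 ≠ k := fun h => h1K (h ▸ hkK)
  have hp0k : p0 ≠ k := fun h => hk0 h.symm
  set P := K₀ \ {p0, k} with hP
  have hpairsub : {p0, k} ⊆ K₀ := by
    intro x hx; simp only [mem_insert, mem_singleton] at hx
    rcases hx with rfl | rfl <;> assumption
  have hPcard : P.card = 6 := by
    rw [hP, card_sdiff_of_subset hpairsub, hoct K₀ hK₀S, card_pair hp0k]
  set W := S.filter (fun K => pinf ∈ K ∧ p0 ∈ K ∧ k ∈ K ∧ (K ∩ K₀).card = 4) with hWdef
  -- |W| = 15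
  have hW15 : W.card = 15 := by
    have := Finset.card_bij (t := P.powersetCard 2)
      (fun (K : Finset Ω) (_ : K ∈ W) => (K ∩ K₀) \ {p0, k})
      (by
        intro K hK
        rw [hWdef, mem_filter] at hK
        obtain ⟨hKS, hpinf, hp0, hk, hc⟩ := hK
        have hsub2 : ({p0, k} : Finset Ω) ⊆ K ∩ K₀ := by
          intro x hx; simp only [mem_insert, mem_singleton] at hx
          rcases hx with rfl | rfl <;> simp [mem_inter, *]
        rw [mem_powersetCard]
        constructor
        · exact sdiff_subset_sdiff inter_subset_right (Finset.Subset.refl _)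
        · rw [card_sdiff_of_subset hsub2, hc, card_pair hp0k]
      )
      (by
        intro K hK K' hK' heq
        rw [hWdef, mem_filter] at hK hK'
        obtain ⟨hKS, hpinf, hp0, hk, hc⟩ := hK
        obtain ⟨hKS', hpinf', hp0', hk', hc'⟩ := hK'
        have hsub2 : ({p0, k} : Finset Ω) ⊆ K ∩ K₀ := by
          intro x hx; simp only [mem_insert, mem_singleton] at hx
          rcases hx with rfl | rfl <;> simp [mem_inter, *]
        have hsub2' : ({p0, k} : Finset Ω) ⊆ K' ∩ K₀ := by
          intro x hx; simp only [mem_insert, mem_singleton] at hx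
          rcases hx with rfl | rfl <;> simp [mem_inter, *]
        have heq' : (K ∩ K₀) \ {p0, k} = (K' ∩ K₀) \ {p0, k} := heq
        have hKK' : K ∩ K₀ = K' ∩ K₀ := by
          rw [← sdiff_union_of_subset hsub2, ← sdiff_union_of_subset hsub2', heq']
        have hpinfnot : pinf ∉ K ∩ K₀ := fun h => hinfK (mem_inter.mp h).2
        have hA5 : (insert pinf (K ∩ K₀)).card = 5 := by
          rw [card_insert_of_notMem hpinfnot, hc]
        obtain ⟨L, _, huniq⟩ := h5 _ hA5
        have e1 : K = L := huniq K ⟨hKS, insert_subset hpinf inter_subset_left⟩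
        have e2 : K' = L := huniq K' ⟨hKS', insert_subset hpinf' (hKK' ▸ inter_subset_left)⟩
        rw [e1, e2]
      )
      (by
        intro B hB
        rw [mem_powersetCard] at hB
        obtain ⟨hBP, hB2⟩ := hB
        have hBK₀ : B ⊆ K₀ := hBP.trans sdiff_subset
        have hp0B : p0 ∉ B := fun h => by simpa using (mem_sdiff.mp (hBP h)).2
        have hkB : k ∉ B := fun h => by simpa using (mem_sdiff.mp (hBP h)).2
        have hc4 : (insert p0 (insert k B)).card = 4 := by
          rw [card_insert_of_notMem (by simp [hp0k, hp0B]),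
            card_insert_of_notMem hkB, hB2]
        have hpinfnot : pinf ∉ insert p0 (insert k B) := by
          simp only [mem_insert, not_or]
          exact ⟨hinf0, hpinfk, fun h => hinfK (hBK₀ h)⟩
        have hA5 : (insert pinf (insert p0 (insert k B))).card = 5 := by
          rw [card_insert_of_notMem hpinfnot, hc4]
        obtain ⟨L, ⟨hLS, hA5L⟩, _⟩ := h5 _ hA5
        have hpinfL : pinf ∈ L := hA5L (by simp)
        have hLne : L ≠ K₀ := fun h => hinfK (h ▸ hpinfL)
        have hsub4 : insert p0 (insert k B) ⊆ L ∩ K₀ := by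
          intro x hx
          refine mem_inter.mpr ⟨hA5L (mem_insert_of_mem hx), ?_⟩
          simp only [mem_insert] at hx
          rcases hx with rfl | rfl | h
          · exact h0K
          · exact hkK
          · exact hBK₀ h
        have hgeq : 4 ≤ (L ∩ K₀).card := hc4 ▸ card_le_card hsub4
        have hle4 : (L ∩ K₀).card ≤ 4 := hcle L hLS hLne
        have hceq : L ∩ K₀ = insert p0 (insert k B) :=
          (Finset.eq_of_subset_of_card_le hsub4 (by omega)).symm
        refine ⟨L, ?_, ?_⟩
        · rw [hWdef, mem_filter]
          exact ⟨hLS, hpinfL, hA5L (by simp), hA5L (by simp), by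
            rw [hceq, hc4]⟩
        · show (L ∩ K₀) \ {p0, k} = B
          rw [hceq]
          ext x
          simp only [mem_sdiff, mem_insert, mem_singleton]
          constructor
          · rintro ⟨rfl | rfl | h, hx2⟩ <;> tauto
          · intro h
            exact ⟨Or.inr (Or.inr h), by rintro (rfl | rfl) <;> tauto⟩
      )
    rw [this, card_powersetCard, hPcard]
    decide
  set H := S.filter (fun K => pinf ∈ K ∧ p0 ∈ K ∧ k ∈ K ∧ p1 ∈ K ∧ (K ∩ K₀).card = 4)
    with hHdef
  have hH3 : H.card = 3 := by
    have key := swapPt P H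
    have L1 : ∀ K ∈ H, (P.filter (· ∈ K)).card = 2 := by
      intro K hK
      rw [hHdef, mem_filter] at hK
      obtain ⟨hKS, hpinf, hp0, hk, hp1, hc⟩ := hK
      have hsub2 : ({p0, k} : Finset Ω) ⊆ K ∩ K₀ := by
        intro x hx; simp only [mem_insert, mem_singleton] at hx
        rcases hx with rfl | rfl <;> simp [mem_inter, *]
      have : P.filter (· ∈ K) = (K ∩ K₀) \ {p0, k} := by
        ext x
        simp only [hP, mem_filter, mem_sdiff, mem_inter]
        tauto
      rw [this, card_sdiff_of_subset hsub2, hc, card_pair hp0k]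
    have L2 : ∀ x ∈ P, (H.filter fun K => x ∈ K).card = 1 := by
      intro x hx
      rw [hP, mem_sdiff, mem_insert, mem_singleton] at hx
      obtain ⟨hxK₀, hxne⟩ := hx
      push_neg at hxne
      obtain ⟨hxp0, hxk⟩ := hxne
      have hc3 : (insert p0 (insert k ({x} : Finset Ω))).card = 3 := by
        rw [card_insert_of_notMem (by simp [hp0k, Ne.symm hxp0]),
          card_insert_of_notMem (by simp [Ne.symm hxk]), card_singleton]
      have hp1not : p1 ∉ insert p0 (insert k ({x} : Finset Ω)) := by
        simp only [mem_insert, mem_singleton, not_or]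
        exact ⟨Ne.symm h01, hp1k, fun h => h1K (h ▸ hxK₀)⟩
      have hpinfnot : pinf ∉ insert p1 (insert p0 (insert k ({x} : Finset Ω))) := by
        simp only [mem_insert, mem_singleton, not_or]
        exact ⟨hinf1, hinf0, hpinfk, fun h => hinfK (h ▸ hxK₀)⟩
      have hA5 : (insert pinf (insert p1 (insert p0 (insert k ({x} : Finset Ω))))).card = 5 := by
        rw [card_insert_of_notMem hpinfnot, card_insert_of_notMem hp1not, hc3]
      obtain ⟨L, ⟨hLS, hA5L⟩, huniq⟩ := h5 _ hA5
      rw [Finset.card_eq_one]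
      refine ⟨L, ?_⟩
      rw [Finset.eq_singleton_iff_unique_mem]
      constructor
      · have hpinfL : pinf ∈ L := hA5L (by simp)
        have hLne : L ≠ K₀ := fun h => hinfK (h ▸ hpinfL)
        have hsub3 : insert p0 (insert k ({x} : Finset Ω)) ⊆ L ∩ K₀ := by
          intro y hy
          refine mem_inter.mpr ⟨hA5L (by simp only [mem_insert, mem_singleton] at hy ⊢; tauto), ?_⟩
          simp only [mem_insert, mem_singleton] at hy
          rcases hy with rfl | rfl | rfl
          · exact h0K
          · exact hkK
          · exact hxK₀
        have hge3 : 3 ≤ (L ∩ K₀).card := hc3 ▸ card_le_card hsub3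
        have hle4 : (L ∩ K₀).card ≤ 4 := hcle L hLS hLne
        have hne3 : (L ∩ K₀).card ≠ 3 := hn3 L hLS hLne
        have hc : (L ∩ K₀).card = 4 := by omega
        rw [mem_filter, hHdef, mem_filter]
        exact ⟨⟨hLS, hA5L (by simp), hA5L (by simp), hA5L (by simp),
          hA5L (by simp), hc⟩, hA5L (by simp)⟩
      · intro K hK
        rw [mem_filter, hHdef, mem_filter] at hK
        obtain ⟨⟨hKS, hpinf, hp0, hk, hp1, _⟩, hxkK⟩ := hK
        refine huniq K ⟨hKS, ?_⟩
        intro y hy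
        simp only [mem_insert, mem_singleton] at hy
        rcases hy with rfl | rfl | rfl | rfl | rfl <;> assumption
    rw [Finset.sum_congr rfl L1, Finset.sum_congr rfl L2] at key
    simp only [Finset.sum_const, smul_eq_mul, mul_one, mul_two] at key
    rw [hPcard] at key
    omega
  have hWH : (W.filter fun K => p1 ∈ K) = H := by
    rw [hWdef, hHdef, filter_filter]
    apply filter_congr
    intro K _
    tauto
  have hWG : (W.filter fun K => ¬ p1 ∈ K) = F.filter fun K => k ∈ K := by
    rw [hWdef, hF, filter_filter, filter_filter]
    apply filter_congr
    intro K _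
    tauto
  have hsplit := Finset.card_filter_add_card_filter_not
    (s := W) (p := fun K => p1 ∈ K)
  rw [hWH, hWG, hW15, hH3] at hsplit
  omega
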